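/- Let B ∈ ℕ and let M be an ∃B-bounded MSC over P and Σ. Then the relation ≺_B is a strict linear order on the event set E of M: it is irreflexive, transitive, and any two distinct events are comparable. -/

import Mathlib

set_option maxHeartbeats 1000000

/-! ## Message sequence charts -/

/-- A message sequence chart (MSC) over processes `P` and labels `Lab`.
Events are natural numbers; `E` is the finite nonempty set of events. -/
structure MSC (P : Type) (Lab : Type) where
  /-- the finite set of events -/
  E : Finset ℕ
  nonemptyE : E.Nonempty
  /-- process edges `→` (direct successor on a process) -/
  proc : ℕ → ℕ → Prop
  /-- message edges `◁` -/
  msg : ℕ → ℕ → Prop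
  /-- location (process) of each event -/
  loc : ℕ → P
  /-- label of each event -/
  lab : ℕ → Lab
  proc_mem : ∀ e f, proc e f → e ∈ E ∧ f ∈ E
  msg_mem : ∀ e f, msg e f → e ∈ E ∧ f ∈ E
  proc_loc : ∀ e f, proc e f → loc e = loc f
  msg_loc : ∀ e f, msg e f → loc e ≠ loc f
  /-- on each process, any two events are comparable w.r.t. `→⁺` -/
  proc_total : ∀ e f, e ∈ E → f ∈ E → loc e = loc f →
    e = f ∨ Relation.TransGen proc e f ∨ Relation.TransGen proc f e
  /-- `→` is the direct-successor (covering) relation of the order `→⁺` -/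
  proc_cover : ∀ e f, proc e f →
    ¬ ∃ g, Relation.TransGen proc e g ∧ Relation.TransGen proc g f
  /-- every event belongs to at most one message edge -/
  msg_once : ∀ e f e' f', msg e f → msg e' f' →
    (e = e' ∨ e = f' ∨ f = e' ∨ f = f') → e = e' ∧ f = f'
  /-- FIFO condition -/
  fifo : ∀ e f e' f', msg e f → msg e' f' → loc e = loc e' → loc f = loc f' →
    (Relation.ReflTransGen proc e e' ↔ Relation.ReflTransGen proc f f')
  /-- `→ ∪ ◁` is acyclic -/
  acyclic : ∀ e, ¬ Relation.TransGen (fun a b => proc a b ∨ msg a b) e e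

namespace MSC

variable {P Lab : Type}

/-- `≤proc`, the reflexive transitive closure of `→`. -/
def procLe (M : MSC P Lab) : ℕ → ℕ → Prop := Relation.ReflTransGen M.proc

/-- `<proc`, the transitive closure of `→`. -/
def procLt (M : MSC P Lab) : ℕ → ℕ → Prop := Relation.TransGen M.proc

/-- the happened-before relation `≤ = (→ ∪ ◁)*`. -/
def hb (M : MSC P Lab) : ℕ → ℕ → Prop :=
  Relation.ReflTransGen (fun a b => M.proc a b ∨ M.msg a b)

/-- Relabelling an MSC (same events and edges, new labelling). -/
def relabel {Γ : Type} (M : MSC P Lab) (γ : ℕ → Γ) : MSC P Γ where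
  E := M.E
  nonemptyE := M.nonemptyE
  proc := M.proc
  msg := M.msg
  loc := M.loc
  lab := γ
  proc_mem := M.proc_mem
  msg_mem := M.msg_mem
  proc_loc := M.proc_loc
  msg_loc := M.msg_loc
  proc_total := M.proc_total
  proc_cover := M.proc_cover
  msg_once := M.msg_once
  fifo := M.fifo
  acyclic := M.acyclic

end MSC

/-! ## Star-free PDL -/

mutual
/-- Event formulas of star-free PDL. -/
inductive EF (P Lab : Type) : Type where
  | proc : P → EF P Lab
  | lab : Lab → EF P Lab
  | or : EF P Lab → EF P Lab → EF P Lab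
  | not : EF P Lab → EF P Lab
  | dia : PF P Lab → EF P Lab → EF P Lab
  | loop : PF P Lab → EF P Lab
/-- Path formulas of star-free PDL. -/
inductive PF (P Lab : Type) : Type where
  | next : PF P Lab
  | prev : PF P Lab
  | msg : P → P → PF P Lab
  | msgInv : P → P → PF P Lab
  | nextG : EF P Lab → PF P Lab
  | prevG : EF P Lab → PF P Lab
  | jump : P → P → PF P Lab
  | test : EF P Lab → PF P Lab
  | comp : PF P Lab → PF P Lab → PF P Lab
  | union : PF P Lab → PF P Lab → PF P Lab
  | inter : PF P Lab → PF P Lab → PF P Lab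
  | compl : PF P Lab → PF P Lab
end

mutual
/-- Satisfaction of event formulas at an event. -/
def EF.sat {P Lab : Type} (M : MSC P Lab) : EF P Lab → ℕ → Prop
  | .proc p, e => e ∈ M.E ∧ M.loc e = p
  | .lab a, e => e ∈ M.E ∧ M.lab e = a
  | .or φ ψ, e => EF.sat M φ e ∨ EF.sat M ψ e
  | .not φ, e => e ∈ M.E ∧ ¬ EF.sat M φ e
  | .dia π φ, e => ∃ f, PF.sem M π e f ∧ EF.sat M φ f
  | .loop π, e => PF.sem M π e e
/-- Semantics of path formulas as binary relations on events. -/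
def PF.sem {P Lab : Type} (M : MSC P Lab) : PF P Lab → ℕ → ℕ → Prop
  | .next, e, f => M.proc e f
  | .prev, e, f => M.proc f e
  | .msg p q, e, f => M.msg e f ∧ M.loc e = p ∧ M.loc f = q
  | .msgInv p q, e, f => M.msg f e ∧ M.loc f = p ∧ M.loc e = q
  | .nextG φ, e, f => M.procLt e f ∧ ∀ g, M.procLt e g → M.procLt g f → EF.sat M φ g
  | .prevG φ, e, f => M.procLt f e ∧ ∀ g, M.procLt f g → M.procLt g e → EF.sat M φ g
  | .jump p r, e, f => e ∈ M.E ∧ f ∈ M.E ∧ M.loc e = p ∧ M.loc f = r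
  | .test φ, e, f => e = f ∧ EF.sat M φ e
  | .comp π₁ π₂, e, f => ∃ g, PF.sem M π₁ e g ∧ PF.sem M π₂ g f
  | .union π₁ π₂, e, f => PF.sem M π₁ e f ∨ PF.sem M π₂ e f
  | .inter π₁ π₂, e, f => PF.sem M π₁ e f ∧ PF.sem M π₂ e f
  | .compl π, e, f => e ∈ M.E ∧ f ∈ M.E ∧ ¬ PF.sem M π e f
end

/-- Sentences of star-free PDL. -/
inductive PDLS (P Lab : Type) : Type where
  | ex : EF P Lab → PDLS P Lab
  | or : PDLS P Lab → PDLS P Lab → PDLS P Lab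
  | not : PDLS P Lab → PDLS P Lab

/-- Satisfaction of PDL sentences. -/
def PDLS.sat {P Lab : Type} (M : MSC P Lab) : PDLS P Lab → Prop
  | .ex φ => ∃ e ∈ M.E, EF.sat M φ e
  | .or ξ ζ => PDLS.sat M ξ ∨ PDLS.sat M ζ
  | .not ξ => ¬ PDLS.sat M ξ

/-- The four optional operators of star-free PDL. -/
inductive PDLOp : Type where
  | loop | union | inter | compl
deriving DecidableEq

mutual
/-- `EF.inFrag R φ` : the event formula `φ` belongs to the fragment `PDLsf[R]`. -/
def EF.inFrag {P Lab : Type} (R : Set PDLOp) : EF P Lab → Prop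
  | .proc _ => True
  | .lab _ => True
  | .or φ ψ => EF.inFrag R φ ∧ EF.inFrag R ψ
  | .not φ => EF.inFrag R φ
  | .dia π φ => PF.inFrag R π ∧ EF.inFrag R φ
  | .loop π => PDLOp.loop ∈ R ∧ PF.inFrag R π
/-- `PF.inFrag R π` : the path formula `π` belongs to the fragment `PDLsf[R]`. -/
def PF.inFrag {P Lab : Type} (R : Set PDLOp) : PF P Lab → Prop
  | .next => True
  | .prev => True
  | .msg _ _ => True
  | .msgInv _ _ => True
  | .nextG φ => EF.inFrag R φ
  | .prevG φ => EF.inFrag R φ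
  | .jump _ _ => True
  | .test φ => EF.inFrag R φ
  | .comp π₁ π₂ => PF.inFrag R π₁ ∧ PF.inFrag R π₂
  | .union π₁ π₂ => PDLOp.union ∈ R ∧ PF.inFrag R π₁ ∧ PF.inFrag R π₂
  | .inter π₁ π₂ => PDLOp.inter ∈ R ∧ PF.inFrag R π₁ ∧ PF.inFrag R π₂
  | .compl π => PDLOp.compl ∈ R ∧ PF.inFrag R π
end

/-- `PDLS.inFrag R ξ` : the sentence `ξ` belongs to the fragment `PDLsf[R]`. -/
def PDLS.inFrag {P Lab : Type} (R : Set PDLOp) : PDLS P Lab → Prop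
  | .ex φ => EF.inFrag R φ
  | .or ξ ζ => PDLS.inFrag R ξ ∧ PDLS.inFrag R ζ
  | .not ξ => PDLS.inFrag R ξ

/-- Conjunction of event formulas (derived operator). -/
def EF.and {P Lab : Type} (φ ψ : EF P Lab) : EF P Lab :=
  .not (.or (.not φ) (.not ψ))

/-- `isMinOf M π e m` : `m` is the `≤proc`-least element of `⟦π⟧_M(e)`
(in particular `⟦π⟧_M(e)` is nonempty). -/
def isMinOf {P Lab : Type} (M : MSC P Lab) (π : PF P Lab) (e m : ℕ) : Prop :=
  PF.sem M π e m ∧ ∀ f, PF.sem M π e f → M.procLe m f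

/-- `isMaxOf M π e m` : `m` is the `≤proc`-greatest element of `⟦π⟧_M(e)`
(in particular `⟦π⟧_M(e)` is nonempty). -/
def isMaxOf {P Lab : Type} (M : MSC P Lab) (π : PF P Lab) (e m : ℕ) : Prop :=
  PF.sem M π e m ∧ ∀ f, PF.sem M π e f → M.procLe f m

/-! ## MSO/FO logic over MSCs -/

/-- Formulas of MSO over MSCs: first-order kernel with atoms `p(x)`, `a(x)`,
`x = y`, `x → y`, `x ◁ y`, `x ≤ y` and additionally `x ∈ X_k` (monadic
second-order variables, used for the EMSO prefix). -/
inductive FOS (P Lab : Type) : Type where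
  | pred : P → ℕ → FOS P Lab
  | lab : Lab → ℕ → FOS P Lab
  | eq : ℕ → ℕ → FOS P Lab
  | edge : ℕ → ℕ → FOS P Lab
  | medge : ℕ → ℕ → FOS P Lab
  | le : ℕ → ℕ → FOS P Lab
  | inSet : ℕ → ℕ → FOS P Lab
  | or : FOS P Lab → FOS P Lab → FOS P Lab
  | not : FOS P Lab → FOS P Lab
  | ex : ℕ → FOS P Lab → FOS P Lab

/-- Satisfaction, with a first-order valuation `ν` and a second-order valuation `σ`.
First-order quantification ranges over the events of the MSC. -/
def FOS.sat {P Lab : Type} (M : MSC P Lab) : FOS P Lab → (ℕ → ℕ) → (ℕ → Set ℕ) → Prop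
  | .pred p x, ν, _ => M.loc (ν x) = p
  | .lab a x, ν, _ => M.lab (ν x) = a
  | .eq x y, ν, _ => ν x = ν y
  | .edge x y, ν, _ => M.proc (ν x) (ν y)
  | .medge x y, ν, _ => M.msg (ν x) (ν y)
  | .le x y, ν, _ => M.hb (ν x) (ν y)
  | .inSet x k, ν, σ => ν x ∈ σ k
  | .or Φ Ψ, ν, σ => FOS.sat M Φ ν σ ∨ FOS.sat M Ψ ν σ
  | .not Φ, ν, σ => ¬ FOS.sat M Φ ν σ
  | .ex x Φ, ν, σ => ∃ e ∈ M.E, FOS.sat M Φ (Function.update ν x e) σ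

/-- Free first-order variables. -/
def FOS.free {P Lab : Type} : FOS P Lab → Finset ℕ
  | .pred _ x => {x}
  | .lab _ x => {x}
  | .eq x y => {x, y}
  | .edge x y => {x, y}
  | .medge x y => {x, y}
  | .le x y => {x, y}
  | .inSet x _ => {x}
  | .or Φ Ψ => FOS.free Φ ∪ FOS.free Ψ
  | .not Φ => FOS.free Φ
  | .ex x Φ => (FOS.free Φ).erase x

/-- All first-order variables occurring (free or bound). -/
def FOS.vars {P Lab : Type} : FOS P Lab → Finset ℕ
  | .pred _ x => {x}
  | .lab _ x => {x}
  | .eq x y => {x, y}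
  | .edge x y => {x, y}
  | .medge x y => {x, y}
  | .le x y => {x, y}
  | .inSet x _ => {x}
  | .or Φ Ψ => FOS.vars Φ ∪ FOS.vars Ψ
  | .not Φ => FOS.vars Φ
  | .ex x Φ => insert x (FOS.vars Φ)

/-- A formula is first-order (`FO[→,◁,≤]`) iff it contains no set atoms. -/
def FOS.noSets {P Lab : Type} : FOS P Lab → Prop
  | .pred _ _ => True
  | .lab _ _ => True
  | .eq _ _ => True
  | .edge _ _ => True
  | .medge _ _ => True
  | .le _ _ => True
  | .inSet _ _ => False
  | .or Φ Ψ => FOS.noSets Φ ∧ FOS.noSets Ψ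
  | .not Φ => FOS.noSets Φ
  | .ex _ Φ => FOS.noSets Φ

/-! ## Communicating finite-state machines -/

/-- Actions of a process: internal `⟨a⟩`, send `!(a,m,q)`, receive `?(a,m,q)`. -/
inductive CAct (P Lab Msg : Type) : Type where
  | int : Lab → CAct P Lab Msg
  | snd : Lab → Msg → P → CAct P Lab Msg
  | rcv : Lab → Msg → P → CAct P Lab Msg

/-- The label performed by an action. -/
def CAct.label {P Lab Msg : Type} : CAct P Lab Msg → Lab
  | .int a => a
  | .snd a _ _ => a
  | .rcv a _ _ => a

/-- A communicating finite-state machine over `P` and `Lab`. -/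
structure CFM (P Lab : Type) where
  /-- states -/
  S : Type
  finS : Fintype S
  /-- messages -/
  Msg : Type
  finMsg : Fintype Msg
  /-- initial state of each process -/
  ι : P → S
  /-- transition relation of each process -/
  Δ : P → S → CAct P Lab Msg → S → Prop
  Δ_snd : ∀ p s a m q s', Δ p s (.snd a m q) s' → q ≠ p
  Δ_rcv : ∀ p s a m q s', Δ p s (.rcv a m q) s' → q ≠ p
  /-- acceptance condition -/
  Acc : (P → S) → Prop

/-- Existence of an accepting run of a CFM on an MSC. -/
def CFM.Accepts {P Lab : Type} (A : CFM P Lab) (M : MSC P Lab) : Prop :=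
  ∃ (src tgt : ℕ → A.S) (act : ℕ → CAct P Lab A.Msg),
    (∀ e ∈ M.E, A.Δ (M.loc e) (src e) (act e) (tgt e)) ∧
    (∀ e ∈ M.E, (act e).label = M.lab e) ∧
    (∀ e ∈ M.E, (¬ ∃ f, M.proc f e) → src e = A.ι (M.loc e)) ∧
    (∀ e f, M.proc e f → tgt e = src f) ∧
    (∀ e ∈ M.E, (¬ ∃ f, M.msg e f) → (¬ ∃ f, M.msg f e) → ∃ a, act e = .int a) ∧
    (∀ e f, M.msg e f →
      ∃ a a' m, act e = .snd a m (M.loc f) ∧ act f = .rcv a' m (M.loc e)) ∧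
    (∃ fin : P → A.S,
      (∀ p, (∀ e ∈ M.E, M.loc e ≠ p) → fin p = A.ι p) ∧
      (∀ e ∈ M.E, (¬ ∃ f, M.proc e f) → fin (M.loc e) = tgt e) ∧
      A.Acc fin)

/-- The language of a CFM. -/
def CFM.lang {P Lab : Type} (A : CFM P Lab) : Set (MSC P Lab) := {M | A.Accepts M}

/-! ## Letter-to-letter MSC transducers -/

/-- The relation accepted by a letter-to-letter MSC transducer from `Lab` to `Γ`,
i.e., a CFM over `P` and `Lab × Γ`. -/
def Ltrans {P Lab Γ : Type} (A : CFM P (Lab × Γ)) (M : MSC P Lab) (N : MSC P Γ) : Prop :=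
  ∃ γ : ℕ → Γ, N = M.relabel γ ∧ A.Accepts (M.relabel fun e => (M.lab e, γ e))

/-- `M_φ` : the MSC over `Bool` obtained from `M` by labelling each event with
the truth value of the event formula `φ`. -/
noncomputable def MSC.evalEF {P Lab : Type} (M : MSC P Lab) (φ : EF P Lab) : MSC P Bool :=
  M.relabel fun e => @ite Bool (EF.sat M φ e) (Classical.propDecidable _) true false

/-! ## Boolean combinations -/

/-- Boolean combinations over atoms of type `α`. -/
inductive BC (α : Type) : Type where
  | atom : α → BC α
  | or : BC α → BC α → BC α
  | not : BC α → BC α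

/-- Evaluation of a boolean combination given truth values of the atoms. -/
def BC.eval {α : Type} (v : α → Prop) : BC α → Prop
  | .atom a => v a
  | .or b c => BC.eval v b ∨ BC.eval v c
  | .not b => ¬ BC.eval v b

/-- The atoms occurring in a boolean combination. -/
def BC.atoms {α : Type} : BC α → Set α
  | .atom a => {a}
  | .or b c => BC.atoms b ∪ BC.atoms c
  | .not b => BC.atoms b

/-! ## Bounded MSCs -/

/-- `r` is a linearization of `M`: a total order on the events containing
the happened-before relation. -/
def IsLinearization {P Lab : Type} (M : MSC P Lab) (r : ℕ → ℕ → Prop) : Prop :=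
  (∀ e ∈ M.E, r e e) ∧
  (∀ e ∈ M.E, ∀ f ∈ M.E, r e f → r f e → e = f) ∧
  (∀ e ∈ M.E, ∀ f ∈ M.E, ∀ g ∈ M.E, r e f → r f g → r e g) ∧
  (∀ e ∈ M.E, ∀ f ∈ M.E, r e f ∨ r f e) ∧
  (∀ e ∈ M.E, ∀ f ∈ M.E, M.hb e f → r e f)

/-- `r` is a `B`-bounded linearization of `M`: at any point, each channel
contains at most `B` pending messages. -/
def IsBBoundedLin {P Lab : Type} (M : MSC P Lab) (r : ℕ → ℕ → Prop) (B : ℕ) : Prop :=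
  IsLinearization M r ∧
  ∀ g ∈ M.E, ∀ p q : P, p ≠ q →
    Set.ncard {ef : ℕ × ℕ | M.msg ef.1 ef.2 ∧ M.loc ef.1 = p ∧ M.loc ef.2 = q ∧
      r ef.1 g ∧ ¬ r ef.2 g} ≤ B

/-- `M` is `∃B`-bounded: some linearization of `M` is `B`-bounded. -/
def ExistsBBounded {P Lab : Type} (M : MSC P Lab) (B : ℕ) : Prop :=
  ∃ r : ℕ → ℕ → Prop, IsBBoundedLin M r B

/-- `g` is a send event on channel `(p,q)`. -/
def isSendOn {P Lab : Type} (M : MSC P Lab) (p q : P) (g : ℕ) : Prop :=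
  M.loc g = p ∧ ∃ h, M.msg g h ∧ M.loc h = q

/-- `revB M B f g` : `f` is a receive event with matching send `e` on some
channel `(p,q)`, and `g` is the `B`-th send on channel `(p,q)` strictly after `e`. -/
def revB {P Lab : Type} (M : MSC P Lab) (B : ℕ) (f g : ℕ) : Prop :=
  ∃ e, M.msg e f ∧ isSendOn M (M.loc e) (M.loc f) g ∧ M.procLt e g ∧
    Set.ncard {g' | isSendOn M (M.loc e) (M.loc f) g' ∧ M.procLt e g' ∧ M.procLe g' g} = B

/-- `≤_B = (≤ ∪ rev_B)*`. -/
def leB {P Lab : Type} (M : MSC P Lab) (B : ℕ) : ℕ → ℕ → Prop :=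
  Relation.ReflTransGen (fun a b => (M.proc a b ∨ M.msg a b) ∨ revB M B a b)

/-- `<_B`, the strict part of `≤_B`. -/
def ltB {P Lab : Type} (M : MSC P Lab) (B : ℕ) (e f : ℕ) : Prop :=
  leB M B e f ∧ ¬ leB M B f e

/-- `e ∥_B f` : incomparable w.r.t. `≤_B`. -/
def parB {P Lab : Type} (M : MSC P Lab) (B : ℕ) (e f : ℕ) : Prop :=
  ¬ leB M B e f ∧ ¬ leB M B f e

/-- `↑_B e = {g : e ≤_B g}`. -/
def upB {P Lab : Type} (M : MSC P Lab) (B : ℕ) (e : ℕ) : Set ℕ :=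
  {g | leB M B e g}

/-- The order `≺_B` (w.r.t. a fixed total order on `P`): `e ≺_B f` iff `e <_B f`, or
`e ∥_B f` and the `⊑`-minimum of `loc(↑_B e \ ↑_B f)` is strictly below the
`⊑`-minimum of `loc(↑_B f \ ↑_B e)`. -/
def precB {P Lab : Type} [LinearOrder P] (M : MSC P Lab) (B : ℕ) (e f : ℕ) : Prop :=
  ltB M B e f ∨
    (parB M B e f ∧ ∃ p ∈ M.loc '' (upB M B e \ upB M B f),
      ∀ q ∈ M.loc '' (upB M B f \ upB M B e), p < q)


section Aux

variable {P Lab : Type}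

private lemma procLe_leB {M : MSC P Lab} {B : ℕ} {a b : ℕ} (h : M.procLe a b) :
    leB M B a b :=
  Relation.ReflTransGen.mono (fun _ _ h => Or.inl (Or.inl h)) _ _ h

private lemma hb_of_procLe {M : MSC P Lab} {a b : ℕ} (h : M.procLe a b) : M.hb a b :=
  Relation.ReflTransGen.mono (fun _ _ h => Or.inl h) _ _ h

private lemma not_procLt_self {M : MSC P Lab} {a : ℕ} (h : M.procLt a a) : False :=
  M.acyclic a (Relation.TransGen.mono (fun _ _ h => Or.inl h) _ _ h)

private lemma revB_mem {M : MSC P Lab} {B : ℕ} {f g : ℕ} (h : revB M B f g) : g ∈ M.E := by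
  obtain ⟨e, _, ⟨_, h0, hm, _⟩, _, _⟩ := h
  exact (M.msg_mem g h0 hm).1

private lemma leB_mem {M : MSC P Lab} {B : ℕ} {e f : ℕ} (he : e ∈ M.E) (h : leB M B e f) :
    f ∈ M.E := by
  induction h with
  | refl => exact he
  | tail _ hstep ih =>
    rcases hstep with (h | h) | h
    · exact (M.proc_mem _ _ h).2
    · exact (M.msg_mem _ _ h).2
    · exact revB_mem h

private lemma revB_r {M : MSC P Lab} {B : ℕ} {r : ℕ → ℕ → Prop}
    (hr : IsBBoundedLin M r B) {f g : ℕ} (h : revB M B f g) :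
    f ∈ M.E ∧ g ∈ M.E ∧ f ≠ g ∧ r f g := by
  obtain ⟨e, hmsg, hsend, hlt, hcard⟩ := h
  obtain ⟨hlocg, h0, hmsg0, hloch0⟩ := hsend
  have heE : e ∈ M.E := (M.msg_mem e f hmsg).1
  have hfE : f ∈ M.E := (M.msg_mem e f hmsg).2
  have hgE : g ∈ M.E := (M.msg_mem g h0 hmsg0).1
  have hlocef : M.loc e ≠ M.loc f := M.msg_loc e f hmsg
  have hfg : f ≠ g := fun hfg => hlocef (by rw [hfg]; exact hlocg.symm)
  refine ⟨hfE, hgE, hfg, ?_⟩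
  by_contra hrfg
  set S := {g' | isSendOn M (M.loc e) (M.loc f) g' ∧ M.procLt e g' ∧ M.procLe g' g} with hS
  have hSfin : S.Finite := by
    apply Set.Finite.subset M.E.finite_toSet
    rintro x ⟨⟨_, h1, hm1, _⟩, _, _⟩
    exact (M.msg_mem x h1 hm1).1
  have heS : e ∉ S := fun hx => not_procLt_self hx.2.1
  have hTcard : (insert e S).ncard = B + 1 := by
    rw [Set.ncard_insert_of_notMem heS hSfin, hcard]
  set Pend := {ef : ℕ × ℕ | M.msg ef.1 ef.2 ∧ M.loc ef.1 = M.loc e ∧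
      M.loc ef.2 = M.loc f ∧ r ef.1 g ∧ ¬ r ef.2 g} with hPend
  have hPB : Pend.ncard ≤ B := hr.2 g hgE (M.loc e) (M.loc f) hlocef
  have hPfin : Pend.Finite := by
    apply Set.Finite.subset (M.E.finite_toSet.prod M.E.finite_toSet)
    rintro ⟨x, y⟩ ⟨hm, _⟩
    exact ⟨(M.msg_mem x y hm).1, (M.msg_mem x y hm).2⟩
  set F : ℕ → ℕ × ℕ := fun x => (x, @dite _ (∃ h, M.msg x h) (Classical.propDecidable _) (fun hx => hx.choose) (fun _ => 0)) with hF
  have hFPend : ∀ x ∈ insert e S, F x ∈ Pend := by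
    intro x hx
    have hex : ∃ h, M.msg x h := by
      rcases hx with rfl | ⟨⟨_, h1, hm1, _⟩, _, _⟩
      · exact ⟨f, hmsg⟩
      · exact ⟨h1, hm1⟩
    have hy : M.msg x hex.choose := hex.choose_spec
    have hFx : F x = (x, hex.choose) := by simp only [hF]; rw [dif_pos hex]
    rw [hFx, hPend, Set.mem_setOf_eq]
    rcases hx with rfl | ⟨⟨hlx, h1, hm1, hl1⟩, hlt1, hle1⟩
    · have hfc : f = hex.choose := (M.msg_once x f x hex.choose hmsg hy (Or.inl rfl)).2
      refine ⟨hy, rfl, ?_, ?_, ?_⟩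
      · rw [← hfc]
      · exact hr.1.2.2.2.2 x heE g hgE (hb_of_procLe (Relation.TransGen.to_reflTransGen hlt))
      · rw [← hfc]; exact hrfg
    · have hxE : x ∈ M.E := (M.msg_mem x h1 hm1).1
      have hcE : hex.choose ∈ M.E := (M.msg_mem x hex.choose hy).2
      have h1c : h1 = hex.choose := (M.msg_once x h1 x hex.choose hm1 hy (Or.inl rfl)).2
      have hlc : M.loc hex.choose = M.loc f := h1c ▸ hl1
      refine ⟨hy, hlx, hlc, ?_, ?_⟩
      · exact hr.1.2.2.2.2 x hxE g hgE (hb_of_procLe hle1)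
      · intro hrc
        have hfle : M.procLe f hex.choose :=
          (M.fifo e f x hex.choose hmsg hy hlx.symm hlc.symm).mp
            (Relation.TransGen.to_reflTransGen hlt1)
        exact hrfg (hr.1.2.2.1 f hfE hex.choose hcE g hgE
          (hr.1.2.2.2.2 f hfE hex.choose hcE (hb_of_procLe hfle)) hrc)
  have hinj : Set.InjOn F (insert e S) := by
    intro a _ b _ hab
    have := congrArg Prod.fst hab
    simpa [hF] using this
  have hcontra : B + 1 ≤ B := by
    calc B + 1 = (insert e S).ncard := hTcard.symm
    _ = (F '' insert e S).ncard := (Set.ncard_image_of_injOn hinj).symm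
    _ ≤ Pend.ncard := Set.ncard_le_ncard (Set.image_subset_iff.mpr hFPend) hPfin
    _ ≤ B := hPB
  omega

private lemma step_r {M : MSC P Lab} {B : ℕ} {r : ℕ → ℕ → Prop}
    (hr : IsBBoundedLin M r B) {a b : ℕ} (ha : a ∈ M.E)
    (h : (M.proc a b ∨ M.msg a b) ∨ revB M B a b) : b ∈ M.E ∧ a ≠ b ∧ r a b := by
  rcases h with h | h
  · have hbE : b ∈ M.E := by
      rcases h with h | h
      exacts [(M.proc_mem a b h).2, (M.msg_mem a b h).2]
    refine ⟨hbE, ?_, hr.1.2.2.2.2 a ha b hbE (Relation.ReflTransGen.single h)⟩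
    rintro rfl
    exact M.acyclic a (Relation.TransGen.single h)
  · obtain ⟨_, hbE, hne, hrab⟩ := revB_r hr h
    exact ⟨hbE, hne, hrab⟩

private lemma leB_r {M : MSC P Lab} {B : ℕ} {r : ℕ → ℕ → Prop}
    (hr : IsBBoundedLin M r B) {e f : ℕ} (he : e ∈ M.E) (h : leB M B e f) :
    f ∈ M.E ∧ (e = f ∨ r e f) := by
  induction h with
  | refl => exact ⟨he, Or.inl rfl⟩
  | @tail x y hxy hstep ih =>
    obtain ⟨hxE, hex⟩ := ih
    obtain ⟨hyE, hne, hrxy⟩ := step_r hr hxE hstep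
    refine ⟨hyE, Or.inr ?_⟩
    rcases hex with rfl | hex
    · exact hrxy
    · exact hr.1.2.2.1 e he x hxE y hyE hex hrxy

private lemma leB_antisymm {M : MSC P Lab} {B : ℕ} (hM : ExistsBBounded M B) {e f : ℕ}
    (he : e ∈ M.E) (h1 : leB M B e f) (h2 : leB M B f e) : e = f := by
  obtain ⟨r, hr⟩ := hM
  obtain ⟨hfE, h1'⟩ := leB_r hr he h1
  rcases h1' with rfl | hre
  · rfl
  obtain ⟨_, h2'⟩ := leB_r hr hfE h2
  rcases h2' with rfl | hrf
  · rfl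
  exact hr.1.2.1 e he f hfE hre hrf

private lemma nested {M : MSC P Lab} {B : ℕ} {e f : ℕ} (he : e ∈ M.E) (hf : f ∈ M.E) (p : P) :
    (∀ x, leB M B e x → M.loc x = p → leB M B f x) ∨
    (∀ x, leB M B f x → M.loc x = p → leB M B e x) := by
  by_contra hc
  push_neg at hc
  obtain ⟨⟨a, hea, hla, hfa⟩, ⟨b, hfb, hlb, heb⟩⟩ := hc
  have haE : a ∈ M.E := leB_mem he hea
  have hbE : b ∈ M.E := leB_mem hf hfb
  rcases M.proc_total a b haE hbE (hla.trans hlb.symm) with rfl | hab | hba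
  · exact heb hea
  · exact heb (Relation.ReflTransGen.trans hea
      (procLe_leB (Relation.TransGen.to_reflTransGen hab)))
  · exact hfa (Relation.ReflTransGen.trans hfb
      (procLe_leB (Relation.TransGen.to_reflTransGen hba)))

/-- `p` is the location of some event above `a` but not above `b`. -/
private def DD (M : MSC P Lab) (B : ℕ) (a b : ℕ) (p : P) : Prop :=
  ∃ x, leB M B a x ∧ M.loc x = p ∧ ¬ leB M B b x

private lemma not_both {M : MSC P Lab} {B : ℕ} {e f : ℕ} (he : e ∈ M.E) (hf : f ∈ M.E)
    {p : P} (h1 : DD M B e f p) (h2 : DD M B f e p) : False := by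
  obtain ⟨a, hea, hla, hfa⟩ := h1
  obtain ⟨b, hfb, hlb, heb⟩ := h2
  rcases nested he hf p with h | h
  · exact hfa (h a hea hla)
  · exact heb (h b hfb hlb)

private lemma cond_iff [LinearOrder P] (M : MSC P Lab) (B : ℕ) (a b : ℕ) :
    (∃ p ∈ M.loc '' (upB M B a \ upB M B b),
      ∀ q ∈ M.loc '' (upB M B b \ upB M B a), p < q) ↔
    (∃ p, DD M B a b p ∧ ∀ q, DD M B b a q → p < q) := by
  simp only [Set.mem_image, Set.mem_diff, upB, Set.mem_setOf_eq, DD]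
  constructor
  · rintro ⟨p, ⟨x, ⟨h1, h3⟩, h2⟩, h4⟩
    exact ⟨p, ⟨x, h1, h2, h3⟩, fun q ⟨y, hy1, hy2, hy3⟩ => h4 q ⟨y, ⟨hy1, hy3⟩, hy2⟩⟩
  · rintro ⟨p, ⟨x, h1, h2, h3⟩, h4⟩
    exact ⟨p, ⟨x, ⟨h1, h3⟩, h2⟩, fun q ⟨y, ⟨hy1, hy3⟩, hy2⟩ => h4 q ⟨y, hy1, hy2, hy3⟩⟩

private lemma key [Fintype P] [LinearOrder P] {M : MSC P Lab} {B : ℕ} {e f g : ℕ}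
    (he : e ∈ M.E) (hf : f ∈ M.E) (hg : g ∈ M.E)
    (h1 : ∃ p, DD M B e f p ∧ ∀ q, DD M B f e q → p < q)
    (h2 : ∃ p, DD M B f g p ∧ ∀ q, DD M B g f q → p < q) :
    ∃ p, DD M B e g p ∧ ∀ q, DD M B g e q → p < q := by
  obtain ⟨p1, hp1, hq1⟩ := h1
  obtain ⟨p2, hp2, hq2⟩ := h2
  set U1 : Set P := {p | DD M B e f p ∨ DD M B f e p} with hU1
  set U2 : Set P := {p | DD M B f g p ∨ DD M B g f p} with hU2
  obtain ⟨a1, ha1, hmin1⟩ := Set.exists_min_image U1 id (Set.toFinite U1) ⟨p1, Or.inl hp1⟩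
  obtain ⟨a2, ha2, hmin2⟩ := Set.exists_min_image U2 id (Set.toFinite U2) ⟨p2, Or.inl hp2⟩
  simp only [id] at hmin1 hmin2
  have ha1' : DD M B e f a1 := by
    rcases ha1 with h | h
    · exact h
    · exact absurd (hmin1 p1 (Or.inl hp1)) (not_le.mpr (hq1 a1 h))
  have ha2' : DD M B f g a2 := by
    rcases ha2 with h | h
    · exact h
    · exact absurd (hmin2 p2 (Or.inl hp2)) (not_le.mpr (hq2 a2 h))
  have heqef : ∀ q, q < a1 → ∀ x, M.loc x = q → (leB M B e x ↔ leB M B f x) := by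
    intro q hq x hx
    constructor
    · intro h
      by_contra hfx
      exact absurd (hmin1 q (Or.inl ⟨x, h, hx, hfx⟩)) (not_le.mpr hq)
    · intro h
      by_contra hex
      exact absurd (hmin1 q (Or.inr ⟨x, h, hx, hex⟩)) (not_le.mpr hq)
  have heqfg : ∀ q, q < a2 → ∀ x, M.loc x = q → (leB M B f x ↔ leB M B g x) := by
    intro q hq x hx
    constructor
    · intro h
      by_contra hgx
      exact absurd (hmin2 q (Or.inl ⟨x, h, hx, hgx⟩)) (not_le.mpr hq)
    · intro h
      by_contra hfx
      exact absurd (hmin2 q (Or.inr ⟨x, h, hx, hfx⟩)) (not_le.mpr hq)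
  have hDeg : DD M B e g (min a1 a2) := by
    rcases lt_trichotomy a1 a2 with h | h | h
    · obtain ⟨x, hex, hlx, hfx⟩ := ha1'
      have e1 : min a1 a2 = a1 := min_eq_left h.le
      exact ⟨x, hex, by rw [e1]; exact hlx,
        fun hgx => hfx ((heqfg a1 h x hlx).mpr hgx)⟩
    · subst h
      obtain ⟨x, hex, hlx, hfx⟩ := ha1'
      obtain ⟨y, hfy, hly, hgy⟩ := ha2'
      have e1 : min a1 a1 = a1 := min_self a1
      refine ⟨x, hex, by rw [e1]; exact hlx, ?_⟩
      rcases nested hf hg a1 with hn | hn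
      · exact absurd (hn y hfy hly) hgy
      · exact fun hgx => hfx (hn x hgx hlx)
    · obtain ⟨y, hfy, hly, hgy⟩ := ha2'
      have e1 : min a1 a2 = a2 := min_eq_right h.le
      exact ⟨y, (heqef a2 h y hly).mpr hfy, by rw [e1]; exact hly, hgy⟩
  refine ⟨min a1 a2, hDeg, ?_⟩
  intro q hDge
  by_contra hle
  push_neg at hle
  rcases lt_or_eq_of_le hle with hlt | heq
  · obtain ⟨y, hgy, hly, hey⟩ := hDge
    have hfy : leB M B f y :=
      (heqfg q (lt_of_lt_of_le hlt (min_le_right a1 a2)) y hly).mpr hgy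
    exact hey ((heqef q (lt_of_lt_of_le hlt (min_le_left a1 a2)) y hly).mpr hfy)
  · subst heq
    exact not_both he hg hDeg hDge

end Aux

/-- For an `∃B`-bounded MSC `M`, the relation `≺_B` is a
strict linear order on the event set: irreflexive, transitive, and total. -/
theorem precB_strict_linear_order {P Lab : Type}
    [Fintype P] [Nonempty P] [LinearOrder P] [Fintype Lab] [Nonempty Lab]
    (B : ℕ) (M : MSC P Lab) (hM : ExistsBBounded M B) :
    (∀ e ∈ M.E, ¬ precB M B e e) ∧
    (∀ e ∈ M.E, ∀ f ∈ M.E, ∀ g ∈ M.E, precB M B e f → precB M B f g → precB M B e g) ∧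
    (∀ e ∈ M.E, ∀ f ∈ M.E, e ≠ f → precB M B e f ∨ precB M B f e) := by
  have hanti : ∀ {e f : ℕ}, e ∈ M.E → leB M B e f → leB M B f e → e = f :=
    fun he h1 h2 => leB_antisymm hM he h1 h2
  have hprec : ∀ a b : ℕ, precB M B a b ↔ (ltB M B a b ∨ (parB M B a b ∧
      ∃ p, DD M B a b p ∧ ∀ q, DD M B b a q → p < q)) := by
    intro a b
    rw [precB, cond_iff]
  refine ⟨?_, ?_, ?_⟩
  · rintro e he (⟨-, h⟩ | ⟨⟨h, -⟩, -⟩)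
    · exact h Relation.ReflTransGen.refl
    · exact h Relation.ReflTransGen.refl
  · intro e he f hf g hg hef hfg
    rw [hprec] at hef hfg ⊢
    rcases hef with hlt1 | ⟨hpar1, hc1⟩
    · rcases hfg with hlt2 | ⟨hpar2, hc2⟩
      · exact Or.inl ⟨Relation.ReflTransGen.trans hlt1.1 hlt2.1,
          fun h => hlt1.2 (Relation.ReflTransGen.trans hlt2.1 h)⟩
      · by_cases heg : leB M B e g
        · exact Or.inl ⟨heg, fun h => hpar2.2 (Relation.ReflTransGen.trans h hlt1.1)⟩
        · have hge : ¬ leB M B g e := fun h => hpar2.2 (Relation.ReflTransGen.trans h hlt1.1)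
          refine Or.inr ⟨⟨heg, hge⟩, ?_⟩
          obtain ⟨p, ⟨x, hfx, hlx, hgx⟩, hq⟩ := hc2
          refine ⟨p, ⟨x, Relation.ReflTransGen.trans hlt1.1 hfx, hlx, hgx⟩, ?_⟩
          rintro q ⟨y, hgy, hly, hey⟩
          exact hq q ⟨y, hgy, hly, fun hfy => hey (Relation.ReflTransGen.trans hlt1.1 hfy)⟩
    · rcases hfg with hlt2 | ⟨hpar2, hc2⟩
      · by_cases heg : leB M B e g
        · exact Or.inl ⟨heg, fun h => hpar1.2 (Relation.ReflTransGen.trans hlt2.1 h)⟩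
        · have hge : ¬ leB M B g e := fun h => hpar1.2 (Relation.ReflTransGen.trans hlt2.1 h)
          refine Or.inr ⟨⟨heg, hge⟩, ?_⟩
          obtain ⟨p, ⟨x, hex, hlx, hfx⟩, hq⟩ := hc1
          refine ⟨p, ⟨x, hex, hlx,
            fun hgx => hfx (Relation.ReflTransGen.trans hlt2.1 hgx)⟩, ?_⟩
          rintro q ⟨y, hgy, hly, hey⟩
          exact hq q ⟨y, Relation.ReflTransGen.trans hlt2.1 hgy, hly, hey⟩
      · by_cases heg : leB M B e g <;> by_cases hge : leB M B g e
        · have hEq : e = g := hanti he heg hge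
          subst hEq
          obtain ⟨p1, hp1, hq1⟩ := hc1
          obtain ⟨p2, hp2, hq2⟩ := hc2
          exact absurd (hq1 p2 hp2) (not_lt.mpr (hq2 p1 hp1).le)
        · exact Or.inl ⟨heg, hge⟩
        · obtain ⟨p1, ⟨x, hex, hlx, hfx⟩, hq1⟩ := hc1
          obtain ⟨p2, ⟨y, hfy, hly, hgy⟩, hq2⟩ := hc2
          have hlt12 : p2 < p1 :=
            hq2 p1 ⟨x, Relation.ReflTransGen.trans hge hex, hlx, hfx⟩
          have hlt21 : p1 < p2 :=
            hq1 p2 ⟨y, hfy, hly, fun hey => hgy (Relation.ReflTransGen.trans hge hey)⟩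
          exact absurd hlt12 (not_lt.mpr hlt21.le)
        · exact Or.inr ⟨⟨heg, hge⟩, key he hf hg hc1 hc2⟩
  · intro e he f hf hne
    by_cases h1 : leB M B e f <;> by_cases h2 : leB M B f e
    · exact absurd (hanti he h1 h2) hne
    · exact Or.inl ((hprec e f).mpr (Or.inl ⟨h1, h2⟩))
    · exact Or.inr ((hprec f e).mpr (Or.inl ⟨h2, h1⟩))
    · have hDef : DD M B e f (M.loc e) := ⟨e, Relation.ReflTransGen.refl, rfl, h2⟩
      set U : Set P := {p | DD M B e f p ∨ DD M B f e p} with hU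
      obtain ⟨a, ha, hmin⟩ := Set.exists_min_image U id (Set.toFinite U) ⟨M.loc e, Or.inl hDef⟩
      simp only [id] at hmin
      rcases ha with ha | ha
      · refine Or.inl ((hprec e f).mpr (Or.inr ⟨⟨h1, h2⟩, a, ha, ?_⟩))
        intro q hq
        rcases lt_or_eq_of_le (hmin q (Or.inr hq)) with h | h
        · exact h
        · subst h
          exact absurd hq fun hc => not_both he hf ha hc
      · refine Or.inr ((hprec f e).mpr (Or.inr ⟨⟨h2, h1⟩, a, ha, ?_⟩))
        intro q hq
        rcases lt_or_eq_of_le (hmin q (Or.inl hq)) with h | h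
        · exact h
        · subst h
          exact absurd hq fun hc => not_both hf he ha hc
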